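/- Let 0 < λ < 1 and define f(λ) = (1 + sqrt(1-λ))² λ. Then f(λ) < 1 if and only if λ < λ*, where λ* = (1/3)[2^{1/3}(13 + 3√33)^{1/3} − 2^{8/3}(13 + 3√33)^{−1/3} − 1] ≈ 0.2956 is the unique root in (0,1) of the equation (1+sqrt(1-λ))²λ = 1. Moreover, for 0 < λ ≤ λ*, one has 3.382 < (1 + sqrt(1-λ))² < 4. -/

import Mathlib

private lemma stmt10_mono : ∀ x y : ℝ, x < y →
    x ^ 3 + x ^ 2 + 3 * x - 1 < y ^ 3 + y ^ 2 + 3 * y - 1 := by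
  intro x y h
  nlinarith [sq_nonneg (x + y), sq_nonneg (x - y), sq_nonneg (x + y + 1),
    mul_pos (sub_pos.mpr h) (sub_pos.mpr h)]

private lemma stmt10_iff (l : ℝ) (h0 : 0 < l) (h1 : l < 1) :
    ((1 + Real.sqrt (1 - l)) ^ 2 * l < 1 ↔ l ^ 3 + l ^ 2 + 3 * l - 1 < 0) ∧
    ((1 + Real.sqrt (1 - l)) ^ 2 * l = 1 ↔ l ^ 3 + l ^ 2 + 3 * l - 1 = 0) := by
  set s : ℝ := Real.sqrt (1 - l) with hs_def
  have hs0 : 0 < s := Real.sqrt_pos.mpr (by linarith)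
  have hs2 : s ^ 2 = 1 - l := Real.sq_sqrt (by linarith)
  have hs3pos : 0 < s ^ 3 := pow_pos hs0 3
  have hfl : (1 + s) ^ 2 * l = 1 + s * (2 * l - s ^ 3) := by
    linear_combination (s ^ 2 + 1) * hs2
  have hs6 : s ^ 6 = (1 - l) ^ 3 := by
    linear_combination (s ^ 4 + s ^ 2 * (1 - l) + (1 - l) ^ 2) * hs2
  rw [hfl]
  constructor
  · constructor
    · intro hlt
      have h2l : 2 * l < s ^ 3 := by
        by_contra h
        push_neg at h
        nlinarith [mul_nonneg hs0.le (by linarith : (0:ℝ) ≤ 2 * l - s ^ 3)]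
      nlinarith [mul_pos (sub_pos.mpr h2l) (by linarith : (0:ℝ) < s ^ 3 + 2 * l), hs6]
    · intro hc
      have h6 : 4 * l ^ 2 < s ^ 6 := by nlinarith [hs6]
      have h2l : 2 * l < s ^ 3 := by
        by_contra h
        push_neg at h
        nlinarith [mul_le_mul h h hs3pos.le (by linarith : (0:ℝ) ≤ 2 * l)]
      nlinarith [mul_pos hs0 (sub_pos.mpr h2l)]
  · constructor
    · intro heq
      have hz : s * (2 * l - s ^ 3) = 0 := by linarith
      have h2l : s ^ 3 = 2 * l := by
        rcases mul_eq_zero.mp hz with h | h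
        · exact absurd h hs0.ne'
        · linarith
      linear_combination (-(s ^ 3 + 2 * l)) * h2l + hs6
    · intro hc
      have h6 : s ^ 6 = 4 * l ^ 2 := by linear_combination hs6 - hc
      have h7 : (s ^ 3 - 2 * l) * (s ^ 3 + 2 * l) = 0 := by linear_combination h6
      have h2l : s ^ 3 = 2 * l := by
        rcases mul_eq_zero.mp h7 with h | h
        · linarith
        · linarith
      rw [h2l]; ring

private lemma stmt10_bounds (l : ℝ) (h0 : 0 < l) (hl : l < 500 / 1691) :
    3.382 < (1 + Real.sqrt (1 - l)) ^ 2 ∧ (1 + Real.sqrt (1 - l)) ^ 2 < 4 := by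
  have hsnn : 0 ≤ Real.sqrt (1 - l) := Real.sqrt_nonneg _
  have hs2 : Real.sqrt (1 - l) ^ 2 = 1 - l := Real.sq_sqrt (by linarith)
  have hslt : Real.sqrt (1 - l) < 1 := by
    by_contra h
    push_neg at h
    nlinarith [mul_le_mul h h (by norm_num : (0:ℝ) ≤ 1) hsnn]
  have hsgt : (0.8391 : ℝ) < Real.sqrt (1 - l) := by
    by_contra h
    push_neg at h
    nlinarith [mul_le_mul h h hsnn (by norm_num : (0:ℝ) ≤ 0.8391)]
  constructor
  ·  nlinarith [hsgt]
  ·  nlinarith [hslt, hsnn]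

/-- properties of `f(λ) = (1+√(1-λ))²λ` and the threshold
`λ* = (1/3)[2^{1/3}(13+3√33)^{1/3} − 2^{8/3}(13+3√33)^{−1/3} − 1]`. -/
theorem stmt_10
    (f : ℝ → ℝ) (hf : ∀ l, f l = (1 + Real.sqrt (1 - l)) ^ 2 * l)
    (lstar : ℝ)
    (hstar : lstar = (1 / 3) * ((2 : ℝ) ^ ((1 : ℝ) / 3) * (13 + 3 * Real.sqrt 33) ^ ((1 : ℝ) / 3)
      - (2 : ℝ) ^ ((8 : ℝ) / 3) * (13 + 3 * Real.sqrt 33) ^ (-(1 : ℝ) / 3) - 1)) :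
    (∀ l : ℝ, 0 < l → l < 1 → (f l < 1 ↔ l < lstar)) ∧
      (0 < lstar ∧ lstar < 1 ∧ f lstar = 1 ∧
        ∀ l : ℝ, 0 < l → l < 1 → f l = 1 → l = lstar) ∧
      (∀ l : ℝ, 0 < l → l ≤ lstar →
        3.382 < (1 + Real.sqrt (1 - l)) ^ 2 ∧ (1 + Real.sqrt (1 - l)) ^ 2 < 4) := by
  have hs33 : Real.sqrt 33 ^ 2 = 33 := Real.sq_sqrt (by norm_num)
  have h13 : (0:ℝ) < 13 + 3 * Real.sqrt 33 := by positivity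
  set a : ℝ := (2 : ℝ) ^ ((1 : ℝ) / 3) with ha_def
  set b : ℝ := (13 + 3 * Real.sqrt 33) ^ ((1 : ℝ) / 3) with hb_def
  have ha0 : 0 < a := Real.rpow_pos_of_pos (by norm_num) _
  have hb0 : 0 < b := Real.rpow_pos_of_pos h13 _
  have ha3 : a ^ 3 = 2 := by
    rw [ha_def, ← Real.rpow_natCast ((2:ℝ) ^ ((1:ℝ)/3)) 3, ← Real.rpow_mul (by norm_num)]
    norm_num
  have hb3 : b ^ 3 = 13 + 3 * Real.sqrt 33 := by
    rw [hb_def, ← Real.rpow_natCast ((13 + 3*Real.sqrt 33 : ℝ) ^ ((1:ℝ)/3)) 3,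
      ← Real.rpow_mul h13.le]
    norm_num
  have h8 : (2:ℝ) ^ ((8:ℝ)/3) = 4 * a ^ 2 := by
    have h : (2:ℝ) ^ ((8:ℝ)/3) = a ^ 8 := by
      rw [ha_def, ← Real.rpow_natCast ((2:ℝ) ^ ((1:ℝ)/3)) 8, ← Real.rpow_mul (by norm_num)]
      norm_num
    rw [h]
    linear_combination (a^2 * (a^3 + 2)) * ha3
  have hneg : (13 + 3 * Real.sqrt 33 : ℝ) ^ (-(1:ℝ)/3) = b⁻¹ := by
    rw [show (-(1:ℝ)/3) = -((1:ℝ)/3) by ring, Real.rpow_neg h13.le, hb_def]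
  set u : ℝ := a * b with hu_def
  have hu0 : 0 < u := mul_pos ha0 hb0
  have hu3 : u ^ 3 = 26 + 6 * Real.sqrt 33 := by
    rw [hu_def, mul_pow, ha3, hb3]; ring
  have hstar' : lstar = (u - 8 / u - 1) / 3 := by
    rw [hstar, h8, hneg, hu_def]
    have h4 : 4 * a ^ 2 * b⁻¹ = 8 / (a * b) := by
      field_simp
      linear_combination 4 * ha3
    rw [h4]; ring
  -- lstar satisfies the cubic
  have hQ : 3 * lstar * u = u ^ 2 - u - 8 := by
    rw [hstar']; field_simp; ring
  have key : 27 * u ^ 3 * (lstar ^ 3 + lstar ^ 2 + 3 * lstar - 1) = 0 := by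
    have e1 : 27 * u ^ 3 * (lstar ^ 3 + lstar ^ 2 + 3 * lstar - 1) =
        (3 * lstar * u) ^ 3 + 3 * u * (3 * lstar * u) ^ 2
          + 27 * u ^ 2 * (3 * lstar * u) - 27 * u ^ 3 := by ring
    rw [e1, hQ]
    linear_combination (u ^ 3 - 26 + 6 * Real.sqrt 33) * hu3 + 36 * hs33
  have hcstar : lstar ^ 3 + lstar ^ 2 + 3 * lstar - 1 = 0 := by
    have h27 : (27:ℝ) * u ^ 3 ≠ 0 := by positivity
    exact (mul_eq_zero.mp key).resolve_left h27
  have hmono := stmt10_mono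
  have h0star : 0 < lstar := by
    by_contra h
    push_neg at h
    rcases eq_or_lt_of_le h with h' | h'
    · rw [h'] at hcstar; norm_num at hcstar
    · have := hmono lstar 0 h'; rw [hcstar] at this; norm_num at this
  have h1star : lstar < 1 := by
    by_contra h
    push_neg at h
    rcases eq_or_lt_of_le h with h' | h'
    · rw [← h'] at hcstar; norm_num at hcstar
    · have := hmono 1 lstar h'; rw [hcstar] at this; norm_num at this
  refine ⟨?_, ⟨h0star, h1star, ?_, ?_⟩, ?_⟩
  · intro l h0 h1
    rw [hf l, (stmt10_iff l h0 h1).1]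
    constructor
    · intro hc
      by_contra h
      push_neg at h
      rcases eq_or_lt_of_le h with h' | h'
      · rw [← h'] at hc; linarith
      · have := hmono lstar l h'; linarith
    · intro h
      have := hmono l lstar h; linarith
  · rw [hf lstar]
    exact (stmt10_iff lstar h0star h1star).2.mpr hcstar
  · intro l h0 h1 hfl1
    rw [hf l] at hfl1
    have hc := (stmt10_iff l h0 h1).2.mp hfl1
    rcases lt_trichotomy l lstar with h | h | h
    · have := hmono l lstar h; linarith
    · exact h
    · have := hmono lstar l h; linarith
  · intro l h0 hle
    have hq : lstar < 500 / 1691 := by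
      by_contra h
      push_neg at h
      rcases eq_or_lt_of_le h with h' | h'
      · rw [← h'] at hcstar; norm_num at hcstar
      · have := hmono (500/1691) lstar h'
        rw [hcstar] at this; norm_num at this
    have hl : l < 500 / 1691 := lt_of_le_of_lt hle hq
    exact stmt10_bounds l h0 hl
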